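/- Let H be a Hilbert space, φ : H → ℝ Fréchet differentiable and λ-convex with λ ≥ 0, with ∇φ L-Lipschitz, and let 0 < τ ≤ 1/L. Suppose X_{n+1} = X_n − (τ/2)(∇φ(X_{n+1}) + ∇φ(X_n)). Then ⟨∇φ(X_n), ∇φ(X_{n+1})⟩ ≥ (1 − Lτ)‖∇φ(X_{n+1})‖² and ‖X_n − X_{n+1}‖² ≥ τ²(1 − Lτ/2)‖∇φ(X_{n+1})‖². -/

import Mathlib

open RealInnerProductSpace Filter Topology

lemma subgrad_ineq {H : Type*} [NormedAddCommGroup H] [InnerProductSpace ℝ H] [CompleteSpace H]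
    (φ : H → ℝ) (x y gx : H) (hg : HasGradientAt φ gx x)
    (hcv : ∀ t ∈ Set.Icc (0:ℝ) 1,
      φ ((1 - t) • x + t • y) ≤ (1 - t) * φ x + t * φ y) :
    φ x + ⟪gx, y - x⟫ ≤ φ y := by
  have hc : HasDerivAt (fun t : ℝ => x + t • (y - x)) (y - x) 0 := by
    simpa using ((hasDerivAt_id (0:ℝ)).smul_const (y - x)).const_add x
  have hgx : HasFDerivAt φ ((InnerProductSpace.toDual ℝ H) gx) (x + (0:ℝ) • (y - x)) := by
    simpa using hg.hasFDerivAt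
  have hf : HasDerivAt (fun t : ℝ => φ (x + t • (y - x))) ⟪gx, y - x⟫ 0 := by
    have h := hgx.comp_hasDerivAt 0 hc
    simp at h
    exact h
  set f : ℝ → ℝ := fun t => φ (x + t • (y - x)) with hfdef
  have hslope : Tendsto (slope f 0) (𝓝[>] 0) (𝓝 ⟪gx, y - x⟫) :=
    (hasDerivAt_iff_tendsto_slope.mp hf).mono_left
      (nhdsWithin_mono _ fun t ht => ne_of_gt ht)
  have hle : ∀ᶠ t in 𝓝[>] (0:ℝ), slope f 0 t ≤ φ y - φ x := by
    filter_upwards [Ioo_mem_nhdsGT_of_mem (by norm_num : (0:ℝ) ∈ Set.Ico 0 1)] with t ht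
    have h1 := hcv t ⟨le_of_lt ht.1, le_of_lt ht.2⟩
    have hft : f t ≤ (1 - t) * φ x + t * φ y := by
      have heq : (1 - t) • x + t • y = x + t • (y - x) := by
        rw [smul_sub]; module
      simpa [hfdef, heq] using h1
    have hf0 : f 0 = φ x := by simp [hfdef]
    rw [slope_def_field, sub_zero, div_le_iff₀ ht.1]
    nlinarith [hft, hf0]
  have := le_of_tendsto hslope hle
  linarith

theorem trapezoid_lower_bounds_L_smooth
    {H : Type*} [NormedAddCommGroup H] [InnerProductSpace ℝ H] [CompleteSpace H]
    (lam τ L : ℝ) (hlam : 0 ≤ lam) (hL : 0 < L) (hτ : 0 < τ) (hτL : τ ≤ 1 / L)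
    (φ : H → ℝ) (g : H → H) (hg : ∀ x, HasGradientAt φ (g x) x)
    (hconv : ∀ x y : H, ∀ t ∈ Set.Icc (0:ℝ) 1,
      φ ((1 - t) • x + t • y) ≤
        (1 - t) * φ x + t * φ y - (lam / 2) * t * (1 - t) * ‖x - y‖ ^ 2)
    (hLip : ∀ x y : H, ‖g x - g y‖ ≤ L * ‖x - y‖)
    (X₀ X₁ : H)
    (himp : X₁ = X₀ - (τ / 2) • (g X₁ + g X₀)) :
    (1 - L * τ) * ‖g X₁‖ ^ 2 ≤ ⟪g X₀, g X₁⟫ ∧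
    τ ^ 2 * (1 - L * τ / 2) * ‖g X₁‖ ^ 2 ≤ ‖X₀ - X₁‖ ^ 2 := by
  have hsub : ∀ x y : H, φ x + ⟪g x, y - x⟫ ≤ φ y := by
    intro x y
    refine subgrad_ineq φ x y (g x) (hg x) (fun t ht => ?_)
    have h := hconv x y t ht
    have h2 : 0 ≤ (lam / 2) * t * (1 - t) * ‖x - y‖ ^ 2 :=
      mul_nonneg (mul_nonneg (mul_nonneg (by linarith) ht.1) (by linarith [ht.2]))
        (sq_nonneg _)
    linarith
  set a := g X₀ with ha
  set b := g X₁ with hb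
  have hd : X₀ - X₁ = (τ / 2) • (a + b) := by
    rw [himp]; rw [smul_add, smul_add]; abel
  have hmono : 0 ≤ ⟪a - b, X₀ - X₁⟫ := by
    have h1 := hsub X₀ X₁
    have h2 := hsub X₁ X₀
    have e1 : ⟪a, X₁ - X₀⟫ = ⟪a, X₁⟫ - ⟪a, X₀⟫ := inner_sub_right a X₁ X₀
    have e2 : ⟪b, X₀ - X₁⟫ = ⟪b, X₀⟫ - ⟪b, X₁⟫ := inner_sub_right b X₀ X₁
    have e3 : ⟪a - b, X₀ - X₁⟫ = (⟪a, X₀⟫ - ⟪a, X₁⟫) - (⟪b, X₀⟫ - ⟪b, X₁⟫) := by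
      rw [inner_sub_left, inner_sub_right, inner_sub_right]
    rw [e1] at h1; rw [e2] at h2; rw [e3]
    linarith
  have hsq : ‖b‖ ^ 2 ≤ ‖a‖ ^ 2 := by
    rw [hd, real_inner_smul_right] at hmono
    have h0 : 0 ≤ ⟪a - b, a + b⟫ := nonneg_of_mul_nonneg_right hmono (by positivity)
    have e : ⟪a - b, a + b⟫ = ‖a‖ ^ 2 - ‖b‖ ^ 2 := by
      rw [inner_sub_left, inner_add_right, inner_add_right,
        real_inner_self_eq_norm_sq, real_inner_self_eq_norm_sq, real_inner_comm b a]
      ring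
    rw [e] at h0; linarith
  have hba : ‖b‖ ≤ ‖a‖ := by
    nlinarith [norm_nonneg a, norm_nonneg b]
  have hnd : ‖X₀ - X₁‖ ≤ τ * ‖a‖ := by
    rw [hd, norm_smul, Real.norm_eq_abs, abs_of_pos (by positivity)]
    have := norm_add_le a b
    nlinarith
  have hLτ : L * τ ≤ 1 := by
    rw [le_div_iff₀ hL] at hτL; linarith
  have hlip : ‖b - a‖ ≤ L * (τ * ‖a‖) := by
    calc ‖b - a‖ ≤ L * ‖X₁ - X₀‖ := hLip X₁ X₀
    _ = L * ‖X₀ - X₁‖ := by rw [norm_sub_rev]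
    _ ≤ L * (τ * ‖a‖) := by nlinarith
  have habs : |⟪b - a, a⟫| ≤ ‖b - a‖ * ‖a‖ := abs_real_inner_le_norm _ _
  have hinner : ⟪a, b⟫ = ‖a‖ ^ 2 + ⟪b - a, a⟫ := by
    rw [inner_sub_left, real_inner_self_eq_norm_sq, real_inner_comm a b]; ring
  have hab : (1 - L * τ) * ‖a‖ ^ 2 ≤ ⟪a, b⟫ := by
    have h1 : -(‖b - a‖ * ‖a‖) ≤ ⟪b - a, a⟫ := neg_le_of_abs_le habs
    nlinarith [norm_nonneg a]
  have goal1 : (1 - L * τ) * ‖b‖ ^ 2 ≤ ⟪a, b⟫ := by nlinarith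
  refine ⟨goal1, ?_⟩
  have hn2 : ‖X₀ - X₁‖ ^ 2 = (τ / 2) ^ 2 * ‖a + b‖ ^ 2 := by
    rw [hd, norm_smul, Real.norm_eq_abs, mul_pow, sq_abs]
  have hnab : ‖a + b‖ ^ 2 = ‖a‖ ^ 2 + 2 * ⟪a, b⟫ + ‖b‖ ^ 2 := by
    rw [norm_add_sq_real]
  rw [hn2, hnab]
  nlinarith [sq_nonneg τ]
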